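/- Let Π be a Boolean MDDLog program over EDB schema S_E and D a set of disjointness constraints over S_E such that Π is semi-simple w.r.t. D. Then Π is empty w.r.t. D if and only if K_θ ⊭ Π for every 0-type θ. -/

import Mathlib

namespace MDDLogPaper

/-! ### Relation symbols, facts, instances, schemas -/

/-- A relation symbol: a name together with an arity.  Names are drawn from the
countably infinite supply `ℕ`. -/
structure RelSym where
  name : ℕ
  arity : ℕ
deriving DecidableEq

/-- A fact: a relation symbol applied to a tuple of constants. Constants are
drawn from the fixed countably infinite set `ℕ`. -/
structure Fact where
  rel : RelSym
  args : List ℕ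
deriving DecidableEq

/-- An instance is a finite set of facts. -/
abbrev Instance := Finset Fact

/-- A schema is a finite set of relation symbols. -/
abbrev Schema := Finset RelSym

/-- `I` is an `S`-instance: every fact of `I` uses a relation symbol of `S`,
applied to a tuple of constants of matching length. -/
def InstanceOver (S : Schema) (I : Instance) : Prop :=
  ∀ f ∈ I, f.rel ∈ S ∧ f.args.length = f.rel.arity

/-- The active domain of an instance: all constants occurring in its facts. -/
def adom (I : Instance) : Finset ℕ :=
  I.biUnion fun f => f.args.toFinset

/-! ### Homomorphisms -/

/-- `h` is a homomorphism from `I` to `J`. -/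
def IsHom (h : ℕ → ℕ) (I J : Instance) : Prop :=
  ∀ f ∈ I, (⟨f.rel, f.args.map h⟩ : Fact) ∈ J

/-- There is a homomorphism from `I` to `J`. -/
def HomTo (I J : Instance) : Prop := ∃ h, IsHom h I J

/-! ### Cycles and girth -/

/-- `I` has a cycle of length `n`: there are `n` distinct facts
`R₀(a₀), …, R_{n-1}(a_{n-1})` in `I` and positions `pᵢ ≠ pᵢ'` of `Rᵢ` such that
the constant of `aᵢ` at position `pᵢ'` equals the constant of `a_{i⊕1}` at
position `p_{i⊕1}` (⊕ is addition modulo `n`). -/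
def HasCycle (I : Instance) (n : ℕ) : Prop :=
  0 < n ∧ ∃ f : ℕ → Fact, ∃ p p' : ℕ → ℕ,
    (∀ i < n, f i ∈ I) ∧
    (∀ i < n, ∀ j < n, i ≠ j → f i ≠ f j) ∧
    (∀ i < n, p i ≠ p' i ∧ p i < (f i).args.length ∧ p' i < (f i).args.length) ∧
    (∀ i < n, (f i).args.getD (p' i) 0 = (f ((i + 1) % n)).args.getD (p ((i + 1) % n)) 0)

/-- The girth of `I` exceeds `k`: `I` has no cycle of length at most `k`. -/
def GirthGT (I : Instance) (k : ℕ) : Prop := ∀ n ≤ k, ¬ HasCycle I n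

/-! ### (Monadic) disjunctive Datalog: syntax -/

/-- An atom: a relation symbol applied to variables (variables are drawn from
the countably infinite supply `ℕ`). -/
structure Atom where
  rel : RelSym
  args : List ℕ
deriving DecidableEq

instance : Inhabited Atom := ⟨⟨⟨0, 0⟩, []⟩⟩

/-- The fact obtained by applying a variable assignment to an atom. -/
def Atom.subst (h : ℕ → ℕ) (a : Atom) : Fact := ⟨a.rel, a.args.map h⟩

/-- A disjunctive Datalog rule `S₁(x₁) ∨ … ∨ Sₘ(xₘ) ← R₁(y₁) ∧ … ∧ Rₙ(yₙ)`,
given by the list of its head atoms and the list of its body atoms. -/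
structure Rule where
  head : List Atom
  body : List Atom
deriving DecidableEq

def Rule.headVars (ρ : Rule) : List ℕ := (ρ.head.map Atom.args).flatten
def Rule.bodyVars (ρ : Rule) : List ℕ := (ρ.body.map Atom.args).flatten
def Rule.vars (ρ : Rule) : List ℕ := ρ.headVars ++ ρ.bodyVars

/-- Well-formed rule: the body is nonempty, atoms respect arities, and every
variable occurring in the head also occurs in the body. -/
def Rule.WF (ρ : Rule) : Prop :=
  ρ.body ≠ [] ∧ (∀ a ∈ ρ.head ++ ρ.body, a.args.length = a.rel.arity) ∧
    ∀ x ∈ ρ.headVars, x ∈ ρ.bodyVars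

/-- A disjunctive Datalog program: a finite set of rules together with a
selected goal relation. -/
structure Program where
  rules : List Rule
  goal : RelSym
deriving DecidableEq

/-- All relation symbols occurring in the program. -/
def Program.rels (P : Program) : List RelSym :=
  (P.rules.map fun ρ => (ρ.head ++ ρ.body).map Atom.rel).flatten

/-- The IDB relations: relation symbols occurring in some rule head. -/
def Program.idb (P : Program) : List RelSym :=
  (P.rules.map fun ρ => ρ.head.map Atom.rel).flatten

def Program.IsIDB (P : Program) (R : RelSym) : Prop := R ∈ P.idb

/-- Well-formed program: all rules are well formed, the goal relation does not
occur in rule bodies, and occurs in heads only as the single disjunct of a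
(non-disjunctive) goal rule. -/
def Program.WF (P : Program) : Prop :=
  (∀ ρ ∈ P.rules, ρ.WF) ∧
  (∀ ρ ∈ P.rules, ∀ a ∈ ρ.body, a.rel ≠ P.goal) ∧
  (∀ ρ ∈ P.rules, ∀ a ∈ ρ.head, a.rel = P.goal → ρ.head = [a])

/-- Monadic: every IDB relation except the goal relation has arity at most one. -/
def Program.Monadic (P : Program) : Prop :=
  ∀ R ∈ P.idb, R ≠ P.goal → R.arity ≤ 1

/-- Boolean: the goal relation is nullary. -/
def Program.Boolean (P : Program) : Prop := P.goal.arity = 0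

/-- `P` is a program over EDB schema `S`: the EDB relations of `P` (the
relation symbols of `P` that do not occur in rule heads) all belong to `S`,
and `S` contains no IDB relation of `P` and not the goal relation. -/
def Program.EDBOver (P : Program) (S : Schema) : Prop :=
  (∀ R ∈ P.rels, ¬ P.IsIDB R → R ∈ S) ∧ (∀ R ∈ S, ¬ P.IsIDB R ∧ R ≠ P.goal)

/-- `P` is a Boolean MDDLog program over EDB schema `S`. -/
def BooleanMDDLogOver (S : Schema) (P : Program) : Prop :=
  P.WF ∧ P.Monadic ∧ P.Boolean ∧ P.EDBOver S

/-! ### Semantics -/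

/-- An instance satisfies a rule if every assignment making all body atoms true
makes some head atom true. -/
def Rule.SatisfiedIn (ρ : Rule) (J : Instance) : Prop :=
  ∀ h : ℕ → ℕ, (∀ a ∈ ρ.body, a.subst h ∈ J) → ∃ a ∈ ρ.head, a.subst h ∈ J

/-- `J` is a model of the program `P`: it satisfies all rules of `P`. -/
def Program.ModelOf (P : Program) (J : Instance) : Prop :=
  ∀ ρ ∈ P.rules, ρ.SatisfiedIn J

/-- Boolean semantics: `I ⊨ P` iff `goal() ∈ J` for every model `J` of `P`
with `I ⊆ J`. -/
def Program.Sat (P : Program) (I : Instance) : Prop :=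
  ∀ J : Instance, I ⊆ J → P.ModelOf J → (⟨P.goal, []⟩ : Fact) ∈ J

/-- `as ∈ P(I)` for a program `P` of arbitrary arity:
`as` is a tuple over the active domain of `I` of length the arity of the goal
relation and `goal(as) ∈ J` for every model `J` of `P` with `I ⊆ J`. -/
def Program.Answers (P : Program) (I : Instance) (as : List ℕ) : Prop :=
  as.length = P.goal.arity ∧ (∀ x ∈ as, x ∈ adom I) ∧
  ∀ J : Instance, I ⊆ J → P.ModelOf J → (⟨P.goal, as⟩ : Fact) ∈ J

/-- Containment of Boolean programs over the EDB schema `S`. -/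
def Contained (S : Schema) (P₁ P₂ : Program) : Prop :=
  ∀ I : Instance, InstanceOver S I → P₁.Sat I → P₂.Sat I

/-- Containment of Boolean programs over `S`-instances of girth exceeding `k`. -/
def ContainedGirth (S : Schema) (k : ℕ) (P₁ P₂ : Program) : Prop :=
  ∀ I : Instance, InstanceOver S I → GirthGT I k → P₁.Sat I → P₂.Sat I

/-! ### Size measures -/

def Atom.size (a : Atom) : ℕ := 1 + a.args.length

def Rule.size (ρ : Rule) : ℕ := ((ρ.head ++ ρ.body).map Atom.size).sum

/-- The size of a program: the number of symbols needed to write it, counting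
relation and variable names as length one. -/
def Program.size (P : Program) : ℕ := (P.rules.map Rule.size).sum

/-- Number of distinct variables of a rule. -/
def Rule.varWidth (ρ : Rule) : ℕ := ρ.vars.dedup.length

/-- Variable width of a set of rules: maximum number of variables in a rule. -/
def rulesVarWidth (rs : List Rule) : ℕ := (rs.map Rule.varWidth).foldr max 0

def Program.varWidth (P : Program) : ℕ := rulesVarWidth P.rules

/-- Atom width of a set of rules: maximum number of atoms in a rule body. -/
def rulesAtomWidth (rs : List Rule) : ℕ := (rs.map fun ρ => ρ.body.length).foldr max 0

/-- Rule size of a set of rules: maximum size of a rule. -/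
def rulesMaxRuleSize (rs : List Rule) : ℕ := (rs.map Rule.size).foldr max 0

/-! ### Simple programs -/

/-- A rule is simple relative to a notion of EDB relation: it contains at most
one EDB atom, any such EDB atom contains all variables of the rule body, each
exactly once, and if there is no EDB atom then the body has at most one
variable. -/
def SimpleRule (isEDB : RelSym → Prop) (ρ : Rule) : Prop :=
  (∀ a ∈ ρ.body, ∀ b ∈ ρ.body, isEDB a.rel → isEDB b.rel → a = b) ∧
  (∀ a ∈ ρ.body, isEDB a.rel → ∀ x ∈ ρ.bodyVars, a.args.count x = 1) ∧
  ((∀ a ∈ ρ.body, ¬ isEDB a.rel) → ρ.bodyVars.dedup.length ≤ 1)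

/-- A simple MDDLog program. -/
def Program.Simple (P : Program) : Prop :=
  ∀ ρ ∈ P.rules, SimpleRule (fun R => ¬ P.IsIDB R) ρ

/-! ### Disjointness constraints -/

/-- A disjointness constraint `⊥ ← P₁(x) ∧ … ∧ Pₙ(x)`, given by the list of
its relations. -/
structure Constraint where
  rels : List RelSym
deriving DecidableEq

/-- Well-formed disjointness constraint: nonempty, and all relations have the
same arity, which is at most one. -/
def Constraint.WF (c : Constraint) : Prop :=
  c.rels ≠ [] ∧ ∃ k ≤ 1, ∀ P ∈ c.rels, P.arity = k

/-- `I` satisfies the disjointness constraint `c`: there is no tuple to which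
all relations of `c` apply in `I`. -/
def Constraint.SatisfiedIn (c : Constraint) (I : Instance) : Prop :=
  ¬ ∃ args : List ℕ, ∀ P ∈ c.rels, args.length = P.arity ∧ (⟨P, args⟩ : Fact) ∈ I

def SatisfiesAll (D : List Constraint) (I : Instance) : Prop :=
  ∀ c ∈ D, c.SatisfiedIn I

/-- The relation symbols occurring in a set of disjointness constraints. -/
def constraintRels (D : List Constraint) : List RelSym :=
  (D.map Constraint.rels).flatten

def ConstraintsOver (S : Schema) (D : List Constraint) : Prop :=
  ∀ R ∈ constraintRels D, R ∈ S

/-- `P` is semi-simple w.r.t. `D`: `P` is simple when all relations occurring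
in `D` are viewed as IDB relations. -/
def Program.SemiSimple (P : Program) (D : List Constraint) : Prop :=
  ∀ ρ ∈ P.rules, SimpleRule (fun R => ¬ P.IsIDB R ∧ R ∉ constraintRels D) ρ

/-- `P` is empty w.r.t. `D` (on `S`-instances). -/
def Program.EmptyWrt (P : Program) (S : Schema) (D : List Constraint) : Prop :=
  ∀ I : Instance, InstanceOver S I → SatisfiesAll D I → ¬ P.Sat I

def constraintsSize (D : List Constraint) : ℕ :=
  (D.map fun c => 1 + c.rels.length).sum

/-- Variable width of a set of disjointness constraints (each constraint uses
a single variable when its relations are unary, none when nullary). -/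
def constraintsVarWidth (D : List Constraint) : ℕ :=
  (D.map fun c => (c.rels.map RelSym.arity).foldr max 0).foldr max 0

/-! ### 0-types, 1-types -/

/-- A 0-type for `D`: a set of nullary relation symbols from the relations of
`D` that does not contain all relations co-occurring in some constraint of `D`. -/
def Is0Type (D : List Constraint) (θ : Finset RelSym) : Prop :=
  (∀ P ∈ θ, P.arity = 0 ∧ P ∈ constraintRels D) ∧
  ∀ c ∈ D, ¬ ∀ P ∈ c.rels, P ∈ θ

/-- A 1-type for `D`. -/
def Is1Type (D : List Constraint) (t : Finset RelSym) : Prop :=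
  (∀ P ∈ t, P.arity = 1 ∧ P ∈ constraintRels D) ∧
  ∀ c ∈ D, ¬ ∀ P ∈ c.rels, P ∈ t

/-- The 0-type of `I` is contained in `θ`. -/
def ZeroTypeLE (D : List Constraint) (I : Instance) (θ : Finset RelSym) : Prop :=
  ∀ P : RelSym, P.arity = 0 → P ∈ constraintRels D → (⟨P, []⟩ : Fact) ∈ I → P ∈ θ

/-- Specification of the facts of the instance `K_θ`, with constants given by
an (injective) encoding `e` of 1-types: `P(t)` for each 1-type `t` and each
`P ∈ t`; `R(t₁,…,tₙ)` for each `R ∈ S \ S_D` and all 1-types `t₁,…,tₙ`; and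
`P()` for each nullary `P ∈ θ`. -/
def KSpec (S : Schema) (D : List Constraint) (e : Finset RelSym → ℕ)
    (θ : Finset RelSym) (f : Fact) : Prop :=
  (∃ t : Finset RelSym, Is1Type D t ∧ ∃ P ∈ t, f = ⟨P, [e t]⟩) ∨
  (∃ R ∈ S, R ∉ constraintRels D ∧
    ∃ ts : List (Finset RelSym), ts.length = R.arity ∧ (∀ t ∈ ts, Is1Type D t) ∧
      f = ⟨R, ts.map e⟩) ∨
  (∃ P ∈ θ, f = ⟨P, []⟩)

/-! ### Conjunctive queries -/

/-- A Boolean conjunctive query: a finite conjunction of atoms, all variables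
existentially quantified. -/
abbrev CQ := List Atom

/-- `I ⊨ q` for a Boolean CQ `q`. -/
def CQSat (q : CQ) (I : Instance) : Prop :=
  ∃ h : ℕ → ℕ, ∀ a ∈ q, a.subst h ∈ I

def CQOver (S : Schema) (q : CQ) : Prop :=
  ∀ a ∈ q, a.rel ∈ S ∧ a.args.length = a.rel.arity

def CQsize (q : CQ) : ℕ := (q.map Atom.size).sum

/-- Containment of a Boolean MDDLog program in a Boolean CQ. -/
def ContainedInCQ (S : Schema) (P : Program) (q : CQ) : Prop :=
  ∀ I : Instance, InstanceOver S I → P.Sat I → CQSat q I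

/-! ### Tiling problems -/

/-- A 2-exp tiling problem `(𝕋, ℍ, 𝕍)`: tile types with horizontal and
vertical matching relations. -/
structure TilingProblem where
  tiles : Finset ℕ
  H : Finset (ℕ × ℕ)
  V : Finset (ℕ × ℕ)

def TilingProblem.WF (P : TilingProblem) : Prop :=
  (∀ p ∈ P.H, p.1 ∈ P.tiles ∧ p.2 ∈ P.tiles) ∧
  (∀ p ∈ P.V, p.1 ∈ P.tiles ∧ p.2 ∈ P.tiles)

def TilingProblem.size (P : TilingProblem) : ℕ := P.tiles.card + P.H.card + P.V.card

/-- There is a tiling of the `2^{2^n} × 2^{2^n}` square for `P` and the input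
word `w` (where `n + 1` is the length of `w`). -/
def HasSquareTiling (P : TilingProblem) (w : List ℕ) : Prop :=
  ∃ f : ℕ → ℕ → ℕ,
    (∀ i < 2 ^ 2 ^ (w.length - 1), ∀ j < 2 ^ 2 ^ (w.length - 1), f i j ∈ P.tiles) ∧
    (∀ j < w.length, f 0 j = w.getD j 0) ∧
    (∀ i, ∀ j < 2 ^ 2 ^ (w.length - 1), i + 1 < 2 ^ 2 ^ (w.length - 1) → (f i j, f (i + 1) j) ∈ P.H) ∧
    (∀ i < 2 ^ 2 ^ (w.length - 1), ∀ j, j + 1 < 2 ^ 2 ^ (w.length - 1) → (f i j, f i (j + 1)) ∈ P.V)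

/-- There is a tiling of the `2^{2^n} × 2^{2^n}` torus for `P` and `w`. -/
def HasTorusTiling (P : TilingProblem) (w : List ℕ) : Prop :=
  ∃ f : ℕ → ℕ → ℕ,
    (∀ i < 2 ^ 2 ^ (w.length - 1), ∀ j < 2 ^ 2 ^ (w.length - 1), f i j ∈ P.tiles) ∧
    (∀ j < w.length, f 0 j = w.getD j 0) ∧
    (∀ i < 2 ^ 2 ^ (w.length - 1), ∀ j < 2 ^ 2 ^ (w.length - 1),
      (f i j, f ((i + 1) % 2 ^ 2 ^ (w.length - 1)) j) ∈ P.H) ∧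
    (∀ i < 2 ^ 2 ^ (w.length - 1), ∀ j < 2 ^ 2 ^ (w.length - 1),
      (f i j, f i ((j + 1) % 2 ^ 2 ^ (w.length - 1))) ∈ P.V)

/-! ### First-order rewritability -/

/-- First-order formulas over relational schemas, with variables from `ℕ`. -/
inductive FO where
  | atom (R : RelSym) (args : List ℕ)
  | eq (x y : ℕ)
  | fls
  | imp (φ ψ : FO)
  | all (x : ℕ) (φ : FO)

/-- Active-domain semantics of first-order formulas on instances. -/
def FO.Eval (I : Instance) : FO → (ℕ → ℕ) → Prop
  | .atom R args, h => (⟨R, args.map h⟩ : Fact) ∈ I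
  | .eq x y, h => h x = h y
  | .fls, _ => False
  | .imp φ ψ, h => FO.Eval I φ h → FO.Eval I ψ h
  | .all x φ, h => ∀ a ∈ adom I, FO.Eval I φ (Function.update h x a)

def FO.Over (S : Schema) : FO → Prop
  | .atom R args => R ∈ S ∧ args.length = R.arity
  | .eq _ _ => True
  | .fls => True
  | .imp φ ψ => FO.Over S φ ∧ FO.Over S ψ
  | .all _ φ => FO.Over S φ

def FOSat (I : Instance) (φ : FO) : Prop := ∀ h : ℕ → ℕ, FO.Eval I φ h

/-- `P` is rewritable into a first-order sentence over `S`. -/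
def FORewritable (S : Schema) (P : Program) : Prop :=
  ∃ φ : FO, FO.Over S φ ∧ ∀ I : Instance, InstanceOver S I → (P.Sat I ↔ FOSat I φ)

/-- A non-disjunctive Datalog program: every rule head consists of exactly one
atom. -/
def Program.IsDatalog (P : Program) : Prop := ∀ ρ ∈ P.rules, ρ.head.length = 1

/-- `P` is rewritable into a Boolean non-disjunctive Datalog program over `S`. -/
def DatalogRewritable (S : Schema) (P : Program) : Prop :=
  ∃ Γ : Program, Γ.WF ∧ Γ.Boolean ∧ Γ.IsDatalog ∧ Γ.EDBOver S ∧
    ∀ I : Instance, InstanceOver S I → (P.Sat I ↔ Γ.Sat I)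

/-! ### Connectedness and biconnectedness of rule bodies -/

/-- Two variables are adjacent in a body if they co-occur in one of its atoms. -/
def VarsAdj (B : List Atom) (x y : ℕ) : Prop := ∃ a ∈ B, x ∈ a.args ∧ y ∈ a.args

def bodyVarsList (B : List Atom) : List ℕ := (B.map Atom.args).flatten

/-- A body is connected if any two of its variables are linked by a path of
adjacent variables. -/
def ConnectedBody (B : List Atom) : Prop :=
  ∀ x ∈ bodyVarsList B, ∀ y ∈ bodyVarsList B, Relation.ReflTransGen (VarsAdj B) x y

/-- Remove a variable from a body: delete all atoms containing it. -/
def RemoveVar (B : List Atom) (x : ℕ) : List Atom :=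
  B.filter fun a => ¬ (a.args.contains x)

/-- A body is biconnected if removing any single variable (with all atoms
containing it) leaves it connected. -/
def Biconnected (B : List Atom) : Prop := ∀ x : ℕ, ConnectedBody (RemoveVar B x)

/-- A reflexive atom `R(x,…,x)`. -/
def ReflexiveAtom (a : Atom) : Prop := a.args ≠ [] ∧ ∃ x, ∀ y ∈ a.args, y = x

end MDDLogPaper

namespace MDDLogPaper

section Helpers

/-- All lists of a given length over a finite set. -/
def listsOfLen {α : Type} [DecidableEq α] (s : Finset α) : ℕ → Finset (List α)
  | 0 => {[]}
  | n+1 => s.biUnion fun a => (listsOfLen s n).image (a :: ·)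

lemma mem_listsOfLen {α : Type} [DecidableEq α] (s : Finset α) (n : ℕ) (l : List α) :
    l ∈ listsOfLen s n ↔ l.length = n ∧ ∀ a ∈ l, a ∈ s := by
  induction n generalizing l with
  | zero =>
    simp only [listsOfLen, Finset.mem_singleton, List.length_eq_zero_iff]
    constructor
    · rintro rfl; simp
    · exact fun h => h.1
  | succ n ih =>
    simp only [listsOfLen, Finset.mem_biUnion, Finset.mem_image]
    constructor
    · rintro ⟨a, ha, l', hl', rfl⟩
      obtain ⟨hlen, hmem⟩ := (ih l').mp hl'
      refine ⟨by simp [hlen], ?_⟩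
      rintro b hb
      rcases List.mem_cons.mp hb with rfl | hb
      · exact ha
      · exact hmem b hb
    · rintro ⟨hlen, hmem⟩
      cases l with
      | nil => simp at hlen
      | cons a l' =>
        exact ⟨a, hmem a (by simp), l',
          (ih l').mpr ⟨by simpa using hlen, fun b hb => hmem b (by simp [hb])⟩, rfl⟩

lemma mem_constraintRels' {D : List Constraint} {c : Constraint} {P : RelSym}
    (hc : c ∈ D) (hP : P ∈ c.rels) : P ∈ constraintRels D := by
  simp only [constraintRels, List.mem_flatten, List.mem_map]
  exact ⟨c.rels, ⟨c, hc, rfl⟩, hP⟩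

/-- Satisfaction of a Boolean disjunctive Datalog program is preserved under
homomorphisms of instances. -/
lemma sat_of_hom (S : Schema) (P : Program) (hwf : P.WF) (hedb : P.EDBOver S)
    (I K : Instance) (hI : InstanceOver S I) (h : ℕ → ℕ) (hh : IsHom h I K)
    (hsat : P.Sat I) : P.Sat K := by
  classical
  intro J hKJ hmod
  by_contra hg
  set pull : Instance :=
    P.idb.toFinset.biUnion fun R =>
      ((listsOfLen (adom I) R.arity).filter fun as => (⟨R, as.map h⟩ : Fact) ∈ J).image
        fun as => (⟨R, as⟩ : Fact) with hpull
  have hpullmem : ∀ f : Fact, f ∈ pull ↔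
      f.rel ∈ P.idb ∧ f.args ∈ listsOfLen (adom I) f.rel.arity ∧
        (⟨f.rel, f.args.map h⟩ : Fact) ∈ J := by
    intro f
    simp only [hpull, Finset.mem_biUnion, Finset.mem_image, Finset.mem_filter,
      List.mem_toFinset]
    constructor
    · rintro ⟨R, hR, as, ⟨has, hJ⟩, rfl⟩
      exact ⟨hR, has, hJ⟩
    · rintro ⟨hR, has, hJ⟩
      exact ⟨f.rel, hR, f.args, ⟨has, hJ⟩, rfl⟩
  have key : (⟨P.goal, []⟩ : Fact) ∈ I ∪ pull := by
    apply hsat (I ∪ pull) Finset.subset_union_left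
    intro ρ hρ g hbody
    -- all body atoms hold in J under h ∘ g
    have hbodyJ : ∀ a ∈ ρ.body, a.subst (h ∘ g) ∈ J := by
      intro a ha
      have hm := hbody a ha
      simp only [Finset.mem_union] at hm
      rcases hm with hm | hm
      · have := hh _ hm
        simpa [Atom.subst, List.map_map] using hKJ this
      · have := (hpullmem _).mp hm
        simp only [Atom.subst] at this ⊢
        rw [← List.map_map]
        exact this.2.2
    -- values of body variables lie in adom I
    have hadom : ∀ x ∈ ρ.bodyVars, g x ∈ adom I := by
      intro x hx
      simp only [Rule.bodyVars, List.mem_flatten, List.mem_map] at hx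
      obtain ⟨_, ⟨a, ha, rfl⟩, hxa⟩ := hx
      have hm := hbody a ha
      simp only [Finset.mem_union] at hm
      rcases hm with hm | hm
      · refine Finset.mem_biUnion.mpr ⟨_, hm, ?_⟩
        simp only [Atom.subst, List.mem_toFinset, List.mem_map]
        exact ⟨x, hxa, rfl⟩
      · have := ((mem_listsOfLen _ _ _).mp ((hpullmem _).mp hm).2.1).2
        exact this _ (by simp only [Atom.subst, List.mem_map]; exact ⟨x, hxa, rfl⟩)
    obtain ⟨b, hb, hbJ⟩ := hmod ρ hρ (h ∘ g) hbodyJ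
    refine ⟨b, hb, Finset.mem_union_right _ ?_⟩
    refine (hpullmem _).mpr ⟨?_, ?_, ?_⟩
    · simp only [Atom.subst, Program.idb, List.mem_flatten, List.mem_map]
      exact ⟨ρ.head.map Atom.rel, ⟨ρ, hρ, rfl⟩, List.mem_map_of_mem hb⟩
    · refine (mem_listsOfLen _ _ _).mpr ⟨?_, ?_⟩
      · simp only [Atom.subst, List.length_map]
        exact (hwf.1 ρ hρ).2.1 b (List.mem_append_left _ hb)
      · intro y hy
        simp only [Atom.subst, List.mem_map] at hy
        obtain ⟨x, hx, rfl⟩ := hy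
        have hxh : x ∈ ρ.headVars := by
          simp only [Rule.headVars, List.mem_flatten, List.mem_map]
          exact ⟨b.args, ⟨b, hb, rfl⟩, hx⟩
        exact hadom x ((hwf.1 ρ hρ).2.2 x hxh)
    · simp only [Atom.subst, List.map_map]
      exact hbJ
  simp only [Finset.mem_union] at key
  rcases key with hkey | hkey
  · exact (hedb.2 _ (hI _ hkey).1).2 rfl
  · exact hg ((hpullmem _).mp hkey).2.2

end Helpers

end MDDLogPaper

namespace MDDLogPaper

/-- `Π` is empty w.r.t. `D` iff `K_θ ⊭ Π` for every 0-type `θ`,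
where the constants of `K_θ` are the 1-types (encoded via an injection `e`). -/
theorem emptiness_iff_Ktheta (S : Schema) (P : Program) (D : List Constraint)
    (hP : BooleanMDDLogOver S P) (hD : ConstraintsOver S D) (hDwf : ∀ c ∈ D, c.WF)
    (hss : P.SemiSimple D)
    (e : Finset RelSym → ℕ) (he : Function.Injective e) :
    P.EmptyWrt S D ↔
      ∀ θ : Finset RelSym, Is0Type D θ →
        ∀ K : Instance, (∀ f : Fact, f ∈ K ↔ KSpec S D e θ f) → ¬ P.Sat K := by
  classical
  constructor
  · -- emptiness implies every K_θ falsifies P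
    intro hempty θ hθ K hK hsatK
    refine hempty K ?_ ?_ hsatK
    · -- K is an S-instance
      intro f hf
      rcases (hK f).mp hf with ⟨t, ht, Q, hQt, rfl⟩ | ⟨R, hR, hRD, ts, hlen, hts, rfl⟩ |
        ⟨Q, hQθ, rfl⟩
      · exact ⟨hD _ (ht.1 Q hQt).2, by simp [(ht.1 Q hQt).1]⟩
      · exact ⟨hR, by simp [hlen]⟩
      · exact ⟨hD _ (hθ.1 Q hQθ).2, by simp [(hθ.1 Q hQθ).1]⟩
    · -- K satisfies all constraints of D
      intro c hc
      rintro ⟨args, hargs⟩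
      obtain ⟨hne, k, hk1, hka⟩ := hDwf c hc
      obtain ⟨P₀, hP₀⟩ := List.exists_mem_of_ne_nil c.rels hne
      rcases Nat.le_one_iff_eq_zero_or_eq_one.mp hk1 with rfl | rfl
      · -- nullary constraint
        have hargs0 : args = [] :=
          List.length_eq_zero_iff.mp (by rw [(hargs P₀ hP₀).1, hka P₀ hP₀])
        subst hargs0
        refine hθ.2 c hc ?_
        intro Q hQ
        rcases (hK _).mp (hargs Q hQ).2 with ⟨t, ht, Q', hQ't, heq⟩ |
          ⟨R, hRS, hRD, ts, hlen, hts, heq⟩ | ⟨Q', hQ'θ, heq⟩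
        · simp [Fact.mk.injEq] at heq
        · obtain ⟨h1, h2⟩ := Fact.mk.injEq .. ▸ heq
          exact absurd (h1 ▸ mem_constraintRels' hc hQ) hRD
        · obtain ⟨h1, h2⟩ := Fact.mk.injEq .. ▸ heq
          exact h1 ▸ hQ'θ
      · -- unary constraint
        have hlen1 : args.length = 1 := by rw [(hargs P₀ hP₀).1, hka P₀ hP₀]
        obtain ⟨a0, rfl⟩ := List.length_eq_one_iff.mp hlen1
        have htypes : ∀ Q ∈ c.rels, ∃ t, Is1Type D t ∧ Q ∈ t ∧ e t = a0 := by
          intro Q hQ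
          rcases (hK _).mp (hargs Q hQ).2 with ⟨t, ht, Q', hQ't, heq⟩ |
            ⟨R, hRS, hRD, ts, hlen, hts, heq⟩ | ⟨Q', hQ'θ, heq⟩
          · obtain ⟨h1, h2⟩ := Fact.mk.injEq .. ▸ heq
            obtain ⟨h3, -⟩ := List.cons.injEq .. ▸ h2
            exact ⟨t, ht, h1 ▸ hQ't, h3.symm⟩
          · obtain ⟨h1, h2⟩ := Fact.mk.injEq .. ▸ heq
            exact absurd (h1 ▸ mem_constraintRels' hc hQ) hRD
          · obtain ⟨h1, h2⟩ := Fact.mk.injEq .. ▸ heq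
            simp at h2
        obtain ⟨t0, ht0, hP0t0, he0⟩ := htypes P₀ hP₀
        refine ht0.2 c hc ?_
        intro Q hQ
        obtain ⟨t, ht, hQt, het⟩ := htypes Q hQ
        have ht0t : t = t0 := he (by rw [het, he0])
        exact ht0t ▸ hQt
  · -- from all K_θ falsifying P to emptiness
    intro hKall I hIS hID hPsat
    set θI : Finset RelSym :=
      (constraintRels D).toFinset.filter
        (fun Q => Q.arity = 0 ∧ (⟨Q, []⟩ : Fact) ∈ I) with hθI
    set tI : ℕ → Finset RelSym := fun a =>
      (constraintRels D).toFinset.filter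
        (fun Q => Q.arity = 1 ∧ (⟨Q, [a]⟩ : Fact) ∈ I) with htIdef
    have hθ0 : Is0Type D θI := by
      constructor
      · intro Q hQ
        have h := Finset.mem_filter.mp hQ
        exact ⟨h.2.1, List.mem_toFinset.mp h.1⟩
      · intro c hc hall
        refine hID c hc ⟨[], ?_⟩
        intro Q hQ
        have h := Finset.mem_filter.mp (hall Q hQ)
        exact ⟨by simp [h.2.1], h.2.2⟩
    have ht1 : ∀ a, Is1Type D (tI a) := by
      intro a
      constructor
      · intro Q hQ
        have h := Finset.mem_filter.mp hQ
        exact ⟨h.2.1, List.mem_toFinset.mp h.1⟩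
      · intro c hc hall
        refine hID c hc ⟨[a], ?_⟩
        intro Q hQ
        have h := Finset.mem_filter.mp (hall Q hQ)
        exact ⟨by simp [h.2.1], h.2.2⟩
    set T1 : Finset (Finset RelSym) :=
      ((constraintRels D).toFinset.powerset).filter (Is1Type D) with hT1
    have hT1mem : ∀ t, t ∈ T1 ↔ Is1Type D t := by
      intro t
      simp only [hT1, Finset.mem_filter, Finset.mem_powerset, and_iff_right_iff_imp]
      intro h1 Q hQ
      exact List.mem_toFinset.mpr (h1.1 Q hQ).2
    set K : Instance :=
      ((T1.biUnion fun t => t.image fun Q => (⟨Q, [e t]⟩ : Fact)) ∪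
       ((S.filter fun R => R ∉ constraintRels D).biUnion fun R =>
         (listsOfLen T1 R.arity).image fun ts => (⟨R, ts.map e⟩ : Fact))) ∪
      (θI.image fun Q => (⟨Q, []⟩ : Fact)) with hKdef
    have hKspec : ∀ f : Fact, f ∈ K ↔ KSpec S D e θI f := by
      intro f
      constructor
      · intro hf
        rcases Finset.mem_union.mp hf with hf | hf
        · rcases Finset.mem_union.mp hf with hf | hf
          · obtain ⟨t, htT, hf⟩ := Finset.mem_biUnion.mp hf
            obtain ⟨Q, hQ, rfl⟩ := Finset.mem_image.mp hf
            exact Or.inl ⟨t, (hT1mem t).mp htT, Q, hQ, rfl⟩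
          · obtain ⟨R, hR, hf⟩ := Finset.mem_biUnion.mp hf
            obtain ⟨hRS, hRD⟩ := Finset.mem_filter.mp hR
            obtain ⟨ts, hts, rfl⟩ := Finset.mem_image.mp hf
            obtain ⟨hlen, htsmem⟩ := (mem_listsOfLen _ _ _).mp hts
            exact Or.inr (Or.inl ⟨R, hRS, hRD, ts, hlen,
              fun t ht => (hT1mem t).mp (htsmem t ht), rfl⟩)
        · obtain ⟨Q, hQ, rfl⟩ := Finset.mem_image.mp hf
          exact Or.inr (Or.inr ⟨Q, hQ, rfl⟩)
      · intro hf
        rcases hf with ⟨t, ht, Q, hQ, rfl⟩ | ⟨R, hRS, hRD, ts, hlen, hts, rfl⟩ |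
          ⟨Q, hQ, rfl⟩
        · refine Finset.mem_union_left _ (Finset.mem_union_left _ ?_)
          exact Finset.mem_biUnion.mpr ⟨t, (hT1mem t).mpr ht,
            Finset.mem_image.mpr ⟨Q, hQ, rfl⟩⟩
        · refine Finset.mem_union_left _ (Finset.mem_union_right _ ?_)
          refine Finset.mem_biUnion.mpr ⟨R, Finset.mem_filter.mpr ⟨hRS, hRD⟩, ?_⟩
          exact Finset.mem_image.mpr ⟨ts, (mem_listsOfLen _ _ _).mpr
            ⟨hlen, fun t ht => (hT1mem t).mpr (hts t ht)⟩, rfl⟩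
        · exact Finset.mem_union_right _ (Finset.mem_image.mpr ⟨Q, hQ, rfl⟩)
    have hhom : IsHom (fun a => e (tI a)) I K := by
      intro f hf
      obtain ⟨R, as⟩ := f
      obtain ⟨hRS, hlen⟩ := hIS _ hf
      by_cases hRD : R ∈ constraintRels D
      · have hRD0 := hRD
        simp only [constraintRels, List.mem_flatten, List.mem_map] at hRD
        obtain ⟨_, ⟨c, hc, rfl⟩, hRc⟩ := hRD
        obtain ⟨hne, k, hk1, hka⟩ := hDwf c hc
        have harR : R.arity = k := hka R hRc
        rcases Nat.le_one_iff_eq_zero_or_eq_one.mp hk1 with rfl | rfl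
        · have has0 : as = [] := List.length_eq_zero_iff.mp (by rw [hlen, harR])
          subst has0
          exact (hKspec _).mpr (Or.inr (Or.inr ⟨R,
            Finset.mem_filter.mpr ⟨List.mem_toFinset.mpr hRD0, harR, hf⟩, rfl⟩))
        · obtain ⟨a, rfl⟩ := List.length_eq_one_iff.mp (by rw [hlen, harR] : as.length = 1)
          exact (hKspec _).mpr (Or.inl ⟨tI a, ht1 a, R,
            Finset.mem_filter.mpr ⟨List.mem_toFinset.mpr hRD0, harR, hf⟩, rfl⟩)
      · refine (hKspec _).mpr (Or.inr (Or.inl ⟨R, hRS, hRD, as.map tI,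
          by simp [hlen], ?_, ?_⟩))
        · intro t ht
          obtain ⟨a, -, rfl⟩ := List.mem_map.mp ht
          exact ht1 a
        · simp [List.map_map, Function.comp]
    exact hKall θI hθ0 K hKspec (sat_of_hom S P hP.1 hP.2.2.2 I K hIS _ hhom hPsat)

end MDDLogPaper
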